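/- Let f : X → X be a minimal equicontinuous homeomorphism of a totally disconnected compact metric space X. Then X is a periodic orbit or f is topologically conjugate to an odometer. -/

import Mathlib

open Filter Topology Metric Set

/-- A periodic structure: a sequence of positive integers with `m j ∣ m (j+1)` and `m j → ∞`. -/
structure PeriodicStructure where
  m : ℕ → ℕ
  pos : ∀ j, 0 < m j
  dvd : ∀ j, m j ∣ m (j + 1)
  tendsto : Filter.Tendsto m Filter.atTop Filter.atTop

/-- The odometer space `X_m` of a periodic structure. -/
def PeriodicStructure.space (p : PeriodicStructure) : Type :=
  {x : ℕ → ℕ // ∀ j, x j < p.m j ∧ x (j + 1) % p.m j = x j}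

instance (p : PeriodicStructure) : TopologicalSpace p.space :=
  inferInstanceAs (TopologicalSpace
    {x : ℕ → ℕ // ∀ j, x j < p.m j ∧ x (j + 1) % p.m j = x j})

/-- The odometer map `g_m` (adding 1 coordinatewise mod `m j`). -/
def PeriodicStructure.step (p : PeriodicStructure) (x : p.space) : p.space :=
  ⟨fun j => (x.1 j + 1) % p.m j, by
    intro j
    refine ⟨Nat.mod_lt _ (p.pos j), ?_⟩
    show (x.1 (j + 1) + 1) % p.m (j + 1) % p.m j = (x.1 j + 1) % p.m j
    rw [Nat.mod_mod_of_dvd _ (p.dvd j), ← (x.2 j).2, Nat.add_mod]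
    exact Nat.add_mod_mod _ _ _⟩

/-- `S` is an odometer for `f`: `f` restricted to `S` is topologically conjugate to
an odometer `g_m : X_m → X_m`. -/
def IsOdometer {X : Type*} [TopologicalSpace X] (f : X → X) (S : Set X) : Prop :=
  ∃ p : PeriodicStructure, ∃ h : p.space ≃ₜ S,
    ∀ z : p.space, f ((h z : X)) = ((h (p.step z) : X))

/-- `S` is a periodic orbit of `f`. -/
def IsPeriodicOrbit {X : Type*} (f : X → X) (S : Set X) : Prop :=
  ∃ x ∈ S, ∃ i : ℕ, 0 < i ∧ f^[i] x = x ∧ S = {y | ∃ j < i, f^[j] x = y}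

/-- The ω-limit set of a sequence of points. -/
def omegaLimitSeq {X : Type*} [TopologicalSpace X] (x : ℕ → X) : Set X :=
  {y | ∃ φ : ℕ → ℕ, StrictMono φ ∧
    Filter.Tendsto (fun j => x (φ j)) Filter.atTop (nhds y)}

/-- The ω-limit set `ω(x, f)` of a point. -/
def omegaLimitPt {X : Type*} [TopologicalSpace X] (f : X → X) (x : X) : Set X :=
  omegaLimitSeq fun i => f^[i] x

/-- `M` is a minimal set for `f`. -/
def IsMinimalSet {X : Type*} [TopologicalSpace X] (f : X → X) (M : Set X) : Prop :=
  M.Nonempty ∧ IsClosed M ∧ Set.MapsTo f M M ∧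
    ∀ S ⊆ M, IsClosed S → Set.MapsTo f S S → S = ∅ ∨ S = M

/-- `x` is a minimal point for `f`. -/
def IsMinimalPoint {X : Type*} [TopologicalSpace X] (f : X → X) (x : X) : Prop :=
  IsMinimalSet f (closure (Set.range fun i => f^[i] x))

/-- `x` is a regularly recurrent point for `f`. -/
def RegularlyRecurrent {X : Type*} [PseudoMetricSpace X] (f : X → X) (x : X) : Prop :=
  ∀ ε > 0, ∃ n : ℕ, 0 < n ∧ ∀ k : ℕ, dist x (f^[k * n] x) ≤ ε

/-- `f` has the shadowing property. -/
def ShadowingProperty {X : Type*} [PseudoMetricSpace X] (f : X → X) : Prop :=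
  ∀ ε > 0, ∃ δ > 0, ∀ ξ : ℕ → X,
    (∀ i, dist (f (ξ i)) (ξ (i + 1)) ≤ δ) → ∃ y, ∀ i, dist (f^[i] y) (ξ i) ≤ ε

namespace OdometerAux

variable {X : Type*} [MetricSpace X] {f : X → X} {δ δ' : ℝ}

/-- One step of a `δ`-chain: the whole forward orbits stay `δ`-close. -/
def Step (f : X → X) (δ : ℝ) (a b : X) : Prop := ∀ i, dist (f^[i] a) (f^[i] b) ≤ δ

/-- The `δ`-chain relation. -/
def Chain (f : X → X) (δ : ℝ) (a b : X) : Prop := Relation.ReflTransGen (Step f δ) a b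

theorem Step.symm {a b : X} (h : Step f δ a b) : Step f δ b a := fun i => by
  rw [dist_comm]; exact h i

theorem Step.map {a b : X} (h : Step f δ a b) : Step f δ (f a) (f b) := fun i => by
  have := h (i + 1)
  rwa [Function.iterate_succ_apply, Function.iterate_succ_apply] at this

theorem Chain.refl (a : X) : Chain f δ a a := Relation.ReflTransGen.refl

theorem Chain.single {a b : X} (h : Step f δ a b) : Chain f δ a b :=
  Relation.ReflTransGen.single h

theorem Chain.tail {a b c : X} (h : Chain f δ a b) (h2 : Step f δ b c) : Chain f δ a c :=
  Relation.ReflTransGen.tail h h2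

theorem Chain.trans {a b c : X} (h : Chain f δ a b) (h2 : Chain f δ b c) : Chain f δ a c :=
  Relation.ReflTransGen.trans h h2

theorem Chain.symm {a b : X} (h : Chain f δ a b) : Chain f δ b a := by
  induction h with
  | refl => exact .refl _
  | tail _ h2 ih => exact (Chain.single h2.symm).trans ih

theorem Chain.map {a b : X} (h : Chain f δ a b) : Chain f δ (f a) (f b) := by
  induction h with
  | refl => exact .refl _
  | tail _ h2 ih => exact ih.tail h2.map

theorem Chain.iterate {a b : X} (h : Chain f δ a b) (k : ℕ) :
    Chain f δ (f^[k] a) (f^[k] b) := by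
  induction k with
  | zero => simpa using h
  | succ n ih =>
      rw [Function.iterate_succ_apply', Function.iterate_succ_apply']
      exact ih.map

theorem Chain.mono (hle : δ ≤ δ') {a b : X} (h : Chain f δ a b) : Chain f δ' a b :=
  Relation.ReflTransGen.mono (fun _ _ hab i => (hab i).trans hle) _ _ h

theorem isOpen_class (hδ : 0 < δ)
    (heq : ∀ ε > (0 : ℝ), ∃ η > (0 : ℝ), ∀ x y : X, dist x y ≤ η →
      ∀ i : ℕ, dist (f^[i] x) (f^[i] y) ≤ ε) (x : X) :
    IsOpen {y | Chain f δ x y} := by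
  obtain ⟨η, hη0, hη⟩ := heq δ hδ
  rw [Metric.isOpen_iff]
  intro y hy
  refine ⟨η, hη0, fun z hz => ?_⟩
  rw [mem_ball, dist_comm] at hz
  exact hy.tail fun i => hη y z hz.le i

theorem isClosed_class (hδ : 0 < δ)
    (heq : ∀ ε > (0 : ℝ), ∃ η > (0 : ℝ), ∀ x y : X, dist x y ≤ η →
      ∀ i : ℕ, dist (f^[i] x) (f^[i] y) ≤ ε) (x : X) :
    IsClosed {y | Chain f δ x y} := by
  obtain ⟨η, hη0, hη⟩ := heq δ hδ
  rw [← isOpen_compl_iff, Metric.isOpen_iff]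
  intro y hy
  refine ⟨η, hη0, fun z hz hc => hy ?_⟩
  rw [mem_ball] at hz
  exact hc.tail fun i => hη z y hz.le i

theorem dense_orbit [CompactSpace X] (hf : Continuous f) (hmin : IsMinimalSet f Set.univ)
    (x : X) : Dense (Set.range fun i => f^[i] x) := by
  set R := Set.range fun i => f^[i] x with hR
  have hmapsR : f '' R ⊆ R := by
    rintro _ ⟨_, ⟨i, rfl⟩, rfl⟩
    refine ⟨i + 1, ?_⟩
    simp [Function.iterate_succ_apply']
  have hmaps : Set.MapsTo f (closure R) (closure R) := by
    intro y hy
    have h1 : f y ∈ f '' closure R := Set.mem_image_of_mem f hy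
    exact closure_mono hmapsR (image_closure_subset_closure_image hf h1)
  rcases hmin.2.2.2 (closure R) (Set.subset_univ _) isClosed_closure hmaps with h | h
  · have hx : x ∈ closure R := subset_closure ⟨0, rfl⟩
    rw [h] at hx
    exact absurd hx (Set.notMem_empty x)
  · exact dense_iff_closure_eq.mpr h

/-- Chains at small enough scale have small diameter. -/
theorem exists_good_delta [CompactSpace X] [TotallyDisconnectedSpace X] [Nonempty X]
    (ε : ℝ) (hε : 0 < ε) :
    ∃ δ > (0 : ℝ), ∀ x y : X, Chain f δ x y → dist x y ≤ ε := by
  have hV : ∀ x : X, ∃ V : Set X, IsClopen V ∧ x ∈ V ∧ V ⊆ ball x (ε / 2) := fun x =>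
    compact_exists_isClopen_in_isOpen isOpen_ball (mem_ball_self (by linarith))
  choose V hVclopen hxV hVball using hV
  obtain ⟨t, ht⟩ := isCompact_univ.elim_finite_subcover V (fun x => (hVclopen x).2)
    (fun x _ => Set.mem_iUnion.mpr ⟨x, hxV x⟩)
  have hη : ∀ x : X, ∃ η > (0 : ℝ), Metric.thickening η (V x) ⊆ V x := fun x => by
    obtain ⟨η, hη0, hη⟩ := ((hVclopen x).1.isCompact).exists_thickening_subset_open
      (hVclopen x).2 (subset_refl _)
    exact ⟨η, hη0, hη⟩
  choose η hη0 hηsub using hη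
  obtain ⟨c0⟩ := ‹Nonempty X›
  have htne : t.Nonempty := by
    rcases Set.mem_iUnion₂.mp (ht (Set.mem_univ c0)) with ⟨c, hc, -⟩
    exact ⟨c, hc⟩
  set δ := t.inf' htne η / 2 with hδdef
  have hδ0 : 0 < δ := by
    have : 0 < t.inf' htne η := (Finset.lt_inf'_iff _).mpr fun c _ => hη0 c
    positivity
  refine ⟨δ, hδ0, fun x y hxy => ?_⟩
  rcases Set.mem_iUnion₂.mp (ht (Set.mem_univ x)) with ⟨w, hwt, hxw⟩
  have hδlt : δ < t.inf' htne η := by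
    have hpos : 0 < t.inf' htne η := (Finset.lt_inf'_iff _).mpr fun c _ => hη0 c
    rw [hδdef]; linarith
  have hstay : ∀ z, Chain f δ x z → z ∈ V w := by
    intro z hz
    induction hz with
    | refl => exact hxw
    | @tail b z _ h2 ih =>
        refine hηsub w ?_
        rw [Metric.mem_thickening_iff]
        refine ⟨b, ih, ?_⟩
        have h0 : dist z b ≤ δ := by simpa using (h2.symm) 0
        exact lt_of_le_of_lt h0 (hδlt.trans_le (Finset.inf'_le _ hwt))
  have hyw := hstay y hxy
  have h1 := hVball w hxw
  have h2 := hVball w hyw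
  rw [mem_ball] at h1 h2
  calc dist x y ≤ dist x w + dist w y := dist_triangle _ _ _
    _ ≤ ε / 2 + ε / 2 := by rw [dist_comm w y]; exact add_le_add h1.le h2.le
    _ = ε := by ring

end OdometerAux


open OdometerAux

theorem minimal_equicontinuous_td_periodic_or_odometer {X : Type*} [MetricSpace X]
    [CompactSpace X] [TotallyDisconnectedSpace X]
    (f : X → X) (hf : Continuous f) (hbij : Function.Bijective f)
    (hmin : IsMinimalSet f Set.univ)
    (heq : ∀ ε > (0 : ℝ), ∃ δ > (0 : ℝ), ∀ x y : X, dist x y ≤ δ →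
      ∀ i : ℕ, dist (f^[i] x) (f^[i] y) ≤ ε) :
    IsPeriodicOrbit f Set.univ ∨ IsOdometer f Set.univ := by
  classical
  obtain ⟨x0, -⟩ := hmin.1
  haveI : Nonempty X := ⟨x0⟩
  rcases finite_or_infinite X with hX | hX
  · -- Periodic orbit case
    left
    obtain ⟨a, b, hab, habeq⟩ := Finite.exists_ne_map_eq_of_infinite (fun n : ℕ => f^[n] x0)
    have H : ∀ a b : ℕ, a < b → f^[a] x0 = f^[b] x0 → ∃ i, 0 < i ∧ f^[i] x0 = x0 := by
      intro a b hlt he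
      refine ⟨b - a, Nat.sub_pos_of_lt hlt, ?_⟩
      have h1 : f^[a] (f^[b - a] x0) = f^[a] x0 := by
        rw [← Function.iterate_add_apply, Nat.add_sub_cancel' hlt.le]
        exact he.symm
      exact hbij.injective.iterate a h1
    have hkey : ∃ i, 0 < i ∧ f^[i] x0 = x0 := by
      rcases lt_or_gt_of_ne hab with h | h
      · exact H a b h habeq
      · exact H b a h habeq.symm
    obtain ⟨i, hi0, hfix⟩ := hkey
    refine ⟨x0, Set.mem_univ _, i, hi0, hfix, ?_⟩
    set S : Set X := {y | ∃ j < i, f^[j] x0 = y} with hS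
    have hSfin : S.Finite := by
      have h1 : S = (fun j => f^[j] x0) '' (Set.Iio i) := by
        ext y
        constructor
        · rintro ⟨j, hj, rfl⟩; exact ⟨j, hj, rfl⟩
        · rintro ⟨j, hj, rfl⟩; exact ⟨j, hj, rfl⟩
      rw [h1]; exact (Set.finite_Iio i).image _
    have hSclosed : IsClosed S := hSfin.isClosed
    have hSmaps : Set.MapsTo f S S := by
      rintro y ⟨j, hj, rfl⟩
      rcases Nat.lt_or_ge (j + 1) i with h | h
      · exact ⟨j + 1, h, Function.iterate_succ_apply' f j x0⟩
      · have hji : j + 1 = i := le_antisymm (Nat.succ_le_of_lt hj) h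
        have h2 : f (f^[j] x0) = x0 := by
          have h4 := Function.iterate_succ_apply' f j x0
          simp only [Nat.succ_eq_add_one] at h4
          rw [hji] at h4
          rw [← h4]
          exact hfix
        exact ⟨0, hi0, by simpa using h2.symm⟩
    have hx0S : x0 ∈ S := ⟨0, hi0, rfl⟩
    rcases hmin.2.2.2 S (Set.subset_univ _) hSclosed hSmaps with h | h
    · rw [h] at hx0S; exact absurd hx0S (Set.notMem_empty x0)
    · exact h.symm
  · -- Odometer case
    right
    haveI := hX
    have key : ∀ δ : ℝ, 0 < δ → ∃ m : ℕ, (0 < m ∧ Chain f δ x0 (f^[m] x0)) ∧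
        (∀ k, Chain f δ (f^[k] x0) (f^[k % m] x0)) ∧
        (∀ i j, i < m → j < m → Chain f δ (f^[i] x0) (f^[j] x0) → i = j) ∧
        (∀ x : X, ∃ i, i < m ∧ Chain f δ (f^[i] x0) x) := by
      intro δ hδ
      have hop : ∀ y : X, IsOpen {z | Chain f δ y z} := fun y => isOpen_class hδ heq y
      have hex : ∃ n, 0 < n ∧ Chain f δ x0 (f^[n] x0) := by
        obtain ⟨z, hz, hzU⟩ := (dense_orbit hf hmin (f x0)).exists_mem_open (hop x0)
          ⟨x0, Chain.refl x0⟩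
        obtain ⟨i, rfl⟩ := hz
        refine ⟨i + 1, Nat.succ_pos i, ?_⟩
        rw [Function.iterate_succ_apply]
        exact hzU
      set m := Nat.find hex with hm
      have hmspec : 0 < m ∧ Chain f δ x0 (f^[m] x0) := Nat.find_spec hex
      have hmmin : ∀ k, 0 < k → k < m → ¬ Chain f δ x0 (f^[k] x0) := by
        intro k hk0 hkm hc
        exact Nat.find_min hex hkm ⟨hk0, hc⟩
      have hper : ∀ k, Chain f δ (f^[k] x0) (f^[k % m] x0) := by
        intro k
        induction k using Nat.strong_induction_on with
        | _ k ih =>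
          rcases Nat.lt_or_ge k m with h | h
          · rw [Nat.mod_eq_of_lt h]
            exact Chain.refl _
          · have h1 : Chain f δ (f^[k] x0) (f^[k - m] x0) := by
              have h2 := (hmspec.2.symm).iterate (k - m)
              rw [← Function.iterate_add_apply, Nat.sub_add_cancel h] at h2
              exact h2
            have h3 := ih (k - m) (Nat.sub_lt (lt_of_lt_of_le hmspec.1 h) hmspec.1)
            rw [Nat.mod_eq_sub_mod h]
            exact h1.trans h3
      have hdisj : ∀ i j, i < m → j < m → Chain f δ (f^[i] x0) (f^[j] x0) → i = j := by
        have key2 : ∀ i j, i < j → j < m → ¬ Chain f δ (f^[i] x0) (f^[j] x0) := by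
          intro i j hij hjm hc
          have h1 := hc.iterate (m - j)
          rw [← Function.iterate_add_apply, ← Function.iterate_add_apply] at h1
          rw [Nat.sub_add_cancel hjm.le] at h1
          have h2 : Chain f δ x0 (f^[m - j + i] x0) := ((h1.trans hmspec.2.symm)).symm
          exact hmmin (m - j + i) (by omega) (by omega) h2
        intro i j him hjm hc
        rcases lt_trichotomy i j with h | h | h
        · exact absurd hc (key2 i j h hjm)
        · exact h
        · exact absurd hc.symm (key2 j i h him)
      have hcov : ∀ x : X, ∃ i, i < m ∧ Chain f δ (f^[i] x0) x := by
        intro x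
        obtain ⟨z, hz, hzU⟩ := (dense_orbit hf hmin x0).exists_mem_open (hop x)
          ⟨x, Chain.refl x⟩
        obtain ⟨k, rfl⟩ := hz
        exact ⟨k % m, Nat.mod_lt _ hmspec.1, (hper k).symm.trans (Chain.symm hzU)⟩
      exact ⟨m, hmspec, hper, hdisj, hcov⟩
    choose! mf hm1 hper hdisj hcov using key
    have hdvd : ∀ δ δ' : ℝ, 0 < δ' → δ' ≤ δ → 0 < δ → mf δ ∣ mf δ' := by
      intro δ δ' hδ' hle hδ
      have hc : Chain f δ x0 (f^[mf δ'] x0) := ((hm1 δ' hδ').2).mono hle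
      have h2 : Chain f δ (f^[0] x0) (f^[mf δ' % mf δ] x0) := by
        simpa using hc.trans (hper δ hδ (mf δ'))
      have h3 := hdisj δ hδ 0 (mf δ' % mf δ) (hm1 δ hδ).1 (Nat.mod_lt _ (hm1 δ hδ).1) h2
      exact Nat.dvd_of_mod_eq_zero h3.symm
    have hunb : ∀ (N : ℕ) (β : ℝ), 0 < β → ∃ δ : ℝ, 0 < δ ∧ δ ≤ β ∧ N ≤ mf δ := by
      intro N β hβ
      rcases le_or_gt N 1 with hN | hN
      · exact ⟨β, hβ, le_refl _, le_trans hN (hm1 β hβ).1⟩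
      · obtain ⟨s, hs⟩ := Infinite.exists_subset_card_eq X N
        obtain ⟨x, hx, y, hy, hxy⟩ := Finset.one_lt_card.mp (by omega : 1 < s.card)
        set P := (s ×ˢ s).filter (fun p => p.1 ≠ p.2) with hP
        have hPne : P.Nonempty := ⟨(x, y), by
          rw [hP, Finset.mem_filter, Finset.mem_product]
          exact ⟨⟨hx, hy⟩, hxy⟩⟩
        set ε0 := P.inf' hPne (fun p => dist p.1 p.2) with hε0
        have hε0pos : 0 < ε0 := by
          rw [hε0]
          refine (Finset.lt_inf'_iff _).mpr ?_
          rintro ⟨a, b⟩ hab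
          rw [hP, Finset.mem_filter] at hab
          exact dist_pos.mpr hab.2
        obtain ⟨δ1, hδ1, hgood⟩ := exists_good_delta (f := f) (ε0 / 2) (by positivity)
        set δ := min δ1 β with hδdef
        have hδ0 : 0 < δ := lt_min hδ1 hβ
        refine ⟨δ, hδ0, min_le_right _ _, ?_⟩
        have hmap : ∀ x ∈ s, (hcov δ hδ0 x).choose ∈ Finset.range (mf δ) :=
          fun x _ => Finset.mem_range.mpr (hcov δ hδ0 x).choose_spec.1
        have hinj : Set.InjOn (fun x => (hcov δ hδ0 x).choose) s := by
          intro a ha b hb hab2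
          by_contra hne
          have h1 := (hcov δ hδ0 a).choose_spec.2
          have h2 := (hcov δ hδ0 b).choose_spec.2
          rw [show (hcov δ hδ0 a).choose = (hcov δ hδ0 b).choose from hab2] at h1
          have hcab : Chain f δ a b := (Chain.symm h1).trans h2
          have hsmall : dist a b ≤ ε0 / 2 := hgood a b (hcab.mono (min_le_left _ _))
          have hlow : ε0 ≤ dist a b := by
            have hmem : (a, b) ∈ P := by
              rw [hP, Finset.mem_filter, Finset.mem_product]
              exact ⟨⟨ha, hb⟩, hne⟩
            rw [hε0]; exact Finset.inf'_le (fun p : X × X => dist p.1 p.2) hmem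
          linarith
        have hcard := Finset.card_le_card_of_injOn _ hmap hinj
        rw [hs, Finset.card_range] at hcard
        exact hcard
    have hrec : ∀ (j : ℕ) (β : ℝ), 0 < β → ∃ δ : ℝ, 0 < δ ∧ δ ≤ β ∧ j ≤ mf δ ∧
        ∀ x y : X, Chain f δ x y → dist x y ≤ 1 / (j + 1) := by
      intro j β hβ
      obtain ⟨δ1, hδ1, hgood⟩ := exists_good_delta (f := f) (1 / (j + 1 : ℝ)) (by positivity)
      obtain ⟨δ, hδ, hle, hN⟩ := hunb j (min β δ1) (lt_min hβ hδ1)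
      exact ⟨δ, hδ, hle.trans (min_le_left _ _), hN,
        fun x y h => hgood x y (h.mono (hle.trans (min_le_right _ _)))⟩
    choose! F hF1 hF2 hF3 hF4 using hrec
    set ds : ℕ → ℝ := fun j => Nat.rec (F 0 1) (fun j δ => F (j + 1) δ) j with hds
    have hdss : ∀ j, ds (j + 1) = F (j + 1) (ds j) := fun j => rfl
    have hpos : ∀ j, 0 < ds j := by
      intro j
      induction j with
      | zero => exact hF1 0 1 one_pos
      | succ n ih => rw [hdss]; exact hF1 (n + 1) (ds n) ih
    have hmono : ∀ j, ds (j + 1) ≤ ds j := fun j => hF2 (j + 1) (ds j) (hpos j)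
    have hmB : ∀ j, j ≤ mf (ds j) := by
      intro j
      cases j with
      | zero => exact Nat.zero_le _
      | succ n => exact hF3 (n + 1) (ds n) (hpos n)
    have hdiam : ∀ (j : ℕ) (x y : X), Chain f (ds j) x y → dist x y ≤ 1 / (j + 1) := by
      intro j
      cases j with
      | zero => exact hF4 0 1 one_pos
      | succ n => exact hF4 (n + 1) (ds n) (hpos n)
    set mseq : ℕ → ℕ := fun j => mf (ds j) with hmseq
    have hmpos : ∀ j, 0 < mseq j := fun j => (hm1 (ds j) (hpos j)).1
    have hmdvd : ∀ j, mseq j ∣ mseq (j + 1) := fun j =>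
      hdvd (ds j) (ds (j + 1)) (hpos (j + 1)) (hmono j) (hpos j)
    have hmtend : Filter.Tendsto mseq Filter.atTop Filter.atTop :=
      tendsto_atTop_mono hmB tendsto_id
    set p : PeriodicStructure := ⟨mseq, hmpos, hmdvd, hmtend⟩ with hp
    have hcov' : ∀ (j : ℕ) (x : X), ∃ i, i < mseq j ∧ Chain f (ds j) (f^[i] x0) x :=
      fun j x => hcov (ds j) (hpos j) x
    choose idx hidxlt hidxch using hcov'
    have huniq : ∀ (j : ℕ) (x : X) (i : ℕ), i < mseq j → Chain f (ds j) (f^[i] x0) x →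
        idx j x = i := fun j x i hi hc =>
      hdisj (ds j) (hpos j) (idx j x) i (hidxlt j x) hi ((hidxch j x).trans (Chain.symm hc))
    have hcompat : ∀ (j : ℕ) (x : X), idx (j + 1) x % mseq j = idx j x := by
      intro j x
      refine (huniq j x (idx (j + 1) x % mseq j) (Nat.mod_lt _ (hmpos j)) ?_).symm
      have h1 : Chain f (ds j) (f^[idx (j + 1) x] x0) x := (hidxch (j + 1) x).mono (hmono j)
      exact (Chain.symm (hper (ds j) (hpos j) (idx (j + 1) x))).trans h1
    set φ : X → p.space := fun x => ⟨fun j => idx j x, fun j => ⟨hidxlt j x, hcompat j x⟩⟩ with hφ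
    have hopen : ∀ (j : ℕ) (y : X), IsOpen {z | Chain f (ds j) y z} :=
      fun j y => isOpen_class (hpos j) heq y
    have hidxcont : ∀ j, Continuous fun x => idx j x := by
      intro j
      refine continuous_def.mpr fun s _ => ?_
      rw [isOpen_iff_forall_mem_open]
      intro x hx
      refine ⟨{z | Chain f (ds j) (f^[idx j x] x0) z}, ?_, hopen j _, hidxch j x⟩
      intro z hz
      show idx j z ∈ s
      rw [huniq j z (idx j x) (hidxlt j x) hz]
      exact hx
    have hφcont : Continuous φ := by
      rw [hφ]
      exact Continuous.subtype_mk (continuous_pi fun j => hidxcont j) _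
    have hφinj : Function.Injective φ := by
      intro a b hab
      have h1 : ∀ j, idx j a = idx j b := fun j => congrFun (congrArg Subtype.val hab) j
      have h2 : ∀ j : ℕ, dist a b ≤ 1 / (j + 1) := by
        intro j
        have hcb : Chain f (ds j) (f^[idx j a] x0) b := by rw [h1 j]; exact hidxch j b
        exact hdiam j a b ((Chain.symm (hidxch j a)).trans hcb)
      have h0 : dist a b ≤ 0 :=
        ge_of_tendsto' tendsto_one_div_add_atTop_nhds_zero_nat h2
      exact dist_le_zero.mp h0
    have hφsurj : Function.Surjective φ := by
      intro a
      set K : ℕ → Set X := fun j => {z | Chain f (ds j) (f^[a.1 j] x0) z} with hK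
      have hKdec : ∀ j, K (j + 1) ⊆ K j := by
        intro j z hz
        have h1 : Chain f (ds j) (f^[a.1 (j + 1)] x0) z := Chain.mono (hmono j) hz
        have h2 : Chain f (ds j) (f^[a.1 (j + 1) % mseq j] x0) (f^[a.1 (j + 1)] x0) :=
          Chain.symm (hper (ds j) (hpos j) (a.1 (j + 1)))
        have h3 := h2.trans h1
        have hmm : a.1 (j + 1) % mseq j = a.1 j := (a.2 j).2
        rw [hmm] at h3
        exact h3
      have hKne : ∀ j, (K j).Nonempty := fun j => ⟨f^[a.1 j] x0, Chain.refl _⟩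
      have hKcl : ∀ j, IsClosed (K j) := fun j => isClosed_class (hpos j) heq _
      obtain ⟨x, hx⟩ := IsCompact.nonempty_iInter_of_sequence_nonempty_isCompact_isClosed K
        hKdec hKne ((hKcl 0).isCompact) hKcl
      refine ⟨x, ?_⟩
      have hvals : ∀ j, idx j x = a.1 j := fun j =>
        huniq j x (a.1 j) (a.2 j).1 (Set.mem_iInter.mp hx j)
      exact Subtype.ext (funext hvals)
    have hstep : ∀ (x : X) (j : ℕ), idx j (f x) = (idx j x + 1) % mseq j := by
      intro x j
      refine huniq j (f x) _ (Nat.mod_lt _ (hmpos j)) ?_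
      have h1 : Chain f (ds j) (f^[idx j x + 1] x0) (f x) := by
        have h2 := (hidxch j x).map
        rwa [← Function.iterate_succ_apply' f (idx j x) x0] at h2
      exact (Chain.symm (hper (ds j) (hpos j) (idx j x + 1))).trans h1
    have hconj : ∀ x : X, φ (f x) = p.step (φ x) := by
      intro x
      refine Subtype.ext (funext fun j => ?_)
      exact hstep x j
    haveI hT2 : T2Space p.space :=
      inferInstanceAs (T2Space {x : ℕ → ℕ // ∀ j, x j < p.m j ∧ x (j + 1) % p.m j = x j})
    let E : X ≃ p.space := Equiv.ofBijective φ ⟨hφinj, hφsurj⟩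
    have hEcont : Continuous E := hφcont
    let E2 : X ≃ₜ p.space := hEcont.homeoOfEquivCompactToT2
    let h' : p.space ≃ₜ (Set.univ : Set X) := E2.symm.trans (Homeomorph.Set.univ X).symm
    refine ⟨p, h', fun z => ?_⟩
    show f (E.symm z) = E.symm (p.step z)
    have h1 := hconj (E.symm z)
    have h2 : φ (E.symm z) = z := E.apply_symm_apply z
    rw [h2] at h1
    have h3 : E.symm (φ (f (E.symm z))) = f (E.symm z) := E.symm_apply_apply _
    rw [h1] at h3
    exact h3.symm
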